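/- Let f : X → ℝ be locally Lipschitz near x̄ on a Banach space X. Then f is strictly differentiable at x̄ in the direction u (i.e. lim_{t↘0, x→x̄} (f(x+tu)−f(x))/t exists in ℝ) if and only if f°(x̄;u) = −f°(x̄;−u), where f°(x̄;u) := limsup_{t↘0, x→x̄}(f(x+tu)−f(x))/t is the Clarke directional derivative. -/

import Mathlib

open Filter Set Topology

variable {X : Type*} [NormedAddCommGroup X] [NormedSpace ℝ X] [CompleteSpace X]

/-- Clarke generalized directional derivative of a locally Lipschitz function. -/
noncomputable def clarkeDeriv (f : X → ℝ) (xb u : X) : EReal :=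
  Filter.limsup
    (fun p : ℝ × X => (((f (p.2 + p.1 • u) - f p.2) / p.1 : ℝ) : EReal))
    ((nhdsWithin 0 (Set.Ioi 0)) ×ˢ nhds xb)

omit [CompleteSpace X] in
private lemma tendsto_shift (xb : X) (w : X) :
    Filter.Tendsto (fun p : ℝ × X => (p.1, p.2 + p.1 • w))
      ((nhdsWithin (0:ℝ) (Set.Ioi 0)) ×ˢ nhds xb)
      ((nhdsWithin (0:ℝ) (Set.Ioi 0)) ×ˢ nhds xb) := by
  rw [Filter.tendsto_prod_iff']
  constructor
  · exact Filter.tendsto_fst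
  · have h1 : Filter.Tendsto (fun p : ℝ × X => p.1)
        ((nhdsWithin (0:ℝ) (Set.Ioi 0)) ×ˢ nhds xb) (nhds 0) :=
      Filter.tendsto_fst.mono_right nhdsWithin_le_nhds
    have := Filter.tendsto_snd.add (h1.smul_const w)
    simpa using this

private lemma map_shift (xb : X) (w : X) :
    Filter.map (fun p : ℝ × X => (p.1, p.2 + p.1 • w))
      ((nhdsWithin (0:ℝ) (Set.Ioi 0)) ×ˢ nhds xb)
      = (nhdsWithin (0:ℝ) (Set.Ioi 0)) ×ˢ nhds xb := by
  refine le_antisymm (tendsto_shift xb w) ?_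
  have key : (fun p : ℝ × X => (p.1, p.2 + p.1 • w)) ∘
      (fun p : ℝ × X => (p.1, p.2 + p.1 • (-w))) = id := by
    funext p; simp
  calc (nhdsWithin (0:ℝ) (Set.Ioi 0)) ×ˢ nhds xb
      = Filter.map ((fun p : ℝ × X => (p.1, p.2 + p.1 • w)) ∘
        (fun p : ℝ × X => (p.1, p.2 + p.1 • (-w))))
        ((nhdsWithin (0:ℝ) (Set.Ioi 0)) ×ˢ nhds xb) := by rw [key, Filter.map_id]
    _ = Filter.map (fun p : ℝ × X => (p.1, p.2 + p.1 • w))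
        (Filter.map (fun p : ℝ × X => (p.1, p.2 + p.1 • (-w)))
        ((nhdsWithin (0:ℝ) (Set.Ioi 0)) ×ˢ nhds xb)) := by rw [Filter.map_map]
    _ ≤ _ := Filter.map_mono (tendsto_shift xb (-w))

theorem stmt17 (f : X → ℝ) (xb : X) (K : NNReal) (ε : ℝ) (hε : 0 < ε)
    (hlip : LipschitzOnWith K f (Metric.ball xb ε)) (u : X) :
    (∃ L : ℝ, Filter.Tendsto
        (fun p : ℝ × X => (f (p.2 + p.1 • u) - f p.2) / p.1)
        ((nhdsWithin 0 (Set.Ioi 0)) ×ˢ nhds xb) (nhds L)) ↔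
      clarkeDeriv f xb u = - clarkeDeriv f xb (-u) := by
  set F : Filter (ℝ × X) := (nhdsWithin (0:ℝ) (Set.Ioi 0)) ×ˢ nhds xb with hF
  haveI : F.NeBot := by
    rw [hF]; exact Filter.prod_neBot.2 ⟨inferInstance, inferInstance⟩
  set g : ℝ × X → ℝ := fun p => (f (p.2 + p.1 • u) - f p.2) / p.1 with hg
  set G : ℝ × X → EReal := fun p => ((g p : ℝ) : EReal) with hG
  -- clarkeDeriv in direction -u equals limsup of -G
  have hneg : clarkeDeriv f xb (-u) = Filter.limsup (-G) F := by
    have h1 : clarkeDeriv f xb (-u)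
        = Filter.limsup (fun p : ℝ × X =>
            (((f (p.2 + p.1 • (-u)) - f p.2) / p.1 : ℝ) : EReal))
          (Filter.map (fun p : ℝ × X => (p.1, p.2 + p.1 • u)) F) := by
      rw [map_shift xb u]; rfl
    rw [h1, ← Filter.limsup_comp]
    congr 1
    funext p
    simp only [Function.comp, Pi.neg_apply, hG, hg]
    rw [show p.2 + p.1 • u + p.1 • (-u) = p.2 by simp]
    rw [← EReal.coe_neg]
    congr 1
    ring
  have hnegG : Filter.limsup (-G) F = - Filter.liminf G F := EReal.limsup_neg
  -- eventual bound
  set C : ℝ := (K : ℝ) * ‖u‖ with hC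
  have hbound : ∀ᶠ p in F, |g p| ≤ C := by
    have hδ : (0:ℝ) < ε / (2 * (‖u‖ + 1)) := by positivity
    have h1 : ∀ᶠ t in nhdsWithin (0:ℝ) (Set.Ioi 0), t ∈ Set.Ioo 0 (ε / (2 * (‖u‖ + 1))) :=
      Ioo_mem_nhdsGT_of_mem ⟨le_refl 0, hδ⟩
    have h2 : ∀ᶠ x in nhds xb, x ∈ Metric.ball xb (ε / 2) :=
      Metric.ball_mem_nhds xb (by positivity)
    refine (h1.prod_mk h2).mono ?_
    rintro ⟨t, x⟩ ⟨⟨ht0, htδ⟩, hx⟩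
    have hxball : x ∈ Metric.ball xb ε := by
      rw [Metric.mem_ball] at hx ⊢
      linarith
    have hxuball : x + t • u ∈ Metric.ball xb ε := by
      rw [Metric.mem_ball, dist_eq_norm] at hx ⊢
      have h3 : ‖x + t • u - xb‖ ≤ ‖x - xb‖ + ‖t • u‖ := by
        have := norm_add_le (x - xb) (t • u)
        simpa [add_sub_right_comm] using this
      have h4 : ‖t • u‖ = t * ‖u‖ := by
        rw [norm_smul, Real.norm_eq_abs, abs_of_pos ht0]
      have h5 : t * ‖u‖ ≤ ε / 2 := by
        have h6 : t * ‖u‖ ≤ (ε / (2 * (‖u‖ + 1))) * (‖u‖ + 1) := by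
          apply mul_le_mul htδ.le (by linarith [norm_nonneg u]) (norm_nonneg u) hδ.le
        have h7 : (ε / (2 * (‖u‖ + 1))) * (‖u‖ + 1) = ε / 2 := by
          field_simp
        linarith
      linarith
    have hd := hlip.dist_le_mul _ hxuball _ hxball
    rw [Real.dist_eq] at hd
    have h8 : dist (x + t • u) x = t * ‖u‖ := by
      rw [dist_eq_norm, add_sub_cancel_left, norm_smul, Real.norm_eq_abs, abs_of_pos ht0]
    rw [h8] at hd
    have h9 : |(f (x + t • u) - f x) / t| ≤ C := by
      rw [abs_div, abs_of_pos ht0, div_le_iff₀ ht0]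
      calc |f (x + t • u) - f x| ≤ (K:ℝ) * (t * ‖u‖) := hd
        _ = C * t := by rw [hC]; ring
    exact h9
  have hub : ∀ᶠ p in F, G p ≤ ((C : ℝ) : EReal) := by
    refine hbound.mono fun p hp => ?_
    exact EReal.coe_le_coe_iff.2 (abs_le.1 hp).2
  have hlb : ∀ᶠ p in F, ((-C : ℝ) : EReal) ≤ G p := by
    refine hbound.mono fun p hp => ?_
    exact EReal.coe_le_coe_iff.2 (abs_le.1 hp).1
  have hsupC : Filter.limsup G F ≤ ((C : ℝ) : EReal) := Filter.limsup_le_of_le (by isBoundedDefault) hub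
  have hinfC : ((-C : ℝ) : EReal) ≤ Filter.liminf G F := Filter.le_liminf_of_le (by isBoundedDefault) hlb
  have hclu : clarkeDeriv f xb u = Filter.limsup G F := rfl
  constructor
  · rintro ⟨L, hL⟩
    have hGL : Filter.Tendsto G F (nhds ((L : ℝ) : EReal)) := EReal.tendsto_coe.2 hL
    rw [hclu, hneg, hnegG, neg_neg, hGL.limsup_eq, hGL.liminf_eq]
  · intro h
    rw [hclu, hneg, hnegG, neg_neg] at h
    have hle : Filter.liminf G F ≤ Filter.limsup G F := Filter.liminf_le_limsup
    have hinfC' : ((-C : ℝ) : EReal) ≤ Filter.limsup G F := le_trans hinfC hle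
    have hne_top : Filter.limsup G F ≠ ⊤ := fun ht => by
      rw [ht] at hsupC; exact (EReal.coe_lt_top C).not_ge hsupC
    have hne_bot : Filter.limsup G F ≠ ⊥ := fun hb => by
      rw [hb] at hinfC'; exact (EReal.bot_lt_coe (-C)).not_ge hinfC'
    set L : ℝ := (Filter.limsup G F).toReal with hL
    have hcoe : ((L : ℝ) : EReal) = Filter.limsup G F := EReal.coe_toReal hne_top hne_bot
    have hGt : Filter.Tendsto G F (nhds ((L : ℝ) : EReal)) := by
      apply tendsto_of_liminf_eq_limsup
      · rw [← h, hcoe]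
      · rw [hcoe]
      · isBoundedDefault
      · isBoundedDefault
    exact ⟨L, EReal.tendsto_coe.1 hGt⟩
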